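/- Let ω : ℝ → ℝ be continuous, and let x, y : ℝ → ℝ be twice differentiable functions satisfying x''(t) + ω(t)²·x(t) = 0 and y''(t) + ω(t)²·y(t) = 0 for all t, with x(t)² + y(t)² > 0 for all t. Define r(t) = √(x(t)² + y(t)²) and h(t) = x(t)·y'(t) − y(t)·x'(t). Then h is constant, and r satisfies the Ermakov–Pinney equation r''(t) + ω(t)²·r(t) = h(0)²/r(t)³ for all t. -/

import Mathlib

/-- Eliezer–Grey interpretation: for the planar time-dependent oscillator with
components `x, y`, the angular momentum `h = xy' − yx'` is conserved and the
radius `r = √(x² + y²)` satisfies `r'' + ω(t)²r = h²/r³`. -/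
theorem eliezer_grey_radial_equation
    (ω : ℝ → ℝ) (hω : Continuous ω)
    (x y : ℝ → ℝ)
    (hx : Differentiable ℝ x) (hx' : Differentiable ℝ (deriv x))
    (hy : Differentiable ℝ y) (hy' : Differentiable ℝ (deriv y))
    (hxeq : ∀ t, deriv (deriv x) t + (ω t) ^ 2 * x t = 0)
    (hyeq : ∀ t, deriv (deriv y) t + (ω t) ^ 2 * y t = 0)
    (hpos : ∀ t, (x t) ^ 2 + (y t) ^ 2 > 0)
    (r h : ℝ → ℝ)
    (hr : r = fun t => Real.sqrt ((x t) ^ 2 + (y t) ^ 2))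
    (hh : h = fun t => x t * deriv y t - y t * deriv x t) :
    (∀ t, h t = h 0) ∧
    (∀ t, deriv (deriv r) t + (ω t) ^ 2 * r t = (h 0) ^ 2 / (r t) ^ 3) := by
  subst hr hh
  -- conservation of angular momentum
  have hconst : ∀ t, (x t * deriv y t - y t * deriv x t)
      = (x 0 * deriv y 0 - y 0 * deriv x 0) := by
    intro t
    have hdiff : Differentiable ℝ (fun t => x t * deriv y t - y t * deriv x t) :=
      (hx.mul hy').sub (hy.mul hx')
    have hd0 : ∀ t, deriv (fun t => x t * deriv y t - y t * deriv x t) t = 0 := by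
      intro t
      have h1 : HasDerivAt (fun t => x t * deriv y t - y t * deriv x t)
          (deriv x t * deriv y t + x t * deriv (deriv y) t -
            (deriv y t * deriv x t + y t * deriv (deriv x) t)) t :=
        ((hx t).hasDerivAt.mul (hy' t).hasDerivAt).sub
          ((hy t).hasDerivAt.mul (hx' t).hasDerivAt)
      rw [h1.deriv]
      have ex := hxeq t; have ey := hyeq t
      linear_combination x t * ey - y t * ex
    exact is_const_of_deriv_eq_zero hdiff hd0 t 0
  refine ⟨hconst, ?_⟩
  intro t
  have hrpos : ∀ t, Real.sqrt (x t ^ 2 + y t ^ 2) > 0 :=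
    fun t => Real.sqrt_pos.2 (hpos t)
  have hsq : ∀ t, Real.sqrt (x t ^ 2 + y t ^ 2) ^ 2 = x t ^ 2 + y t ^ 2 :=
    fun t => Real.sq_sqrt (hpos t).le
  have hsder : ∀ t, HasDerivAt (fun t => x t ^ 2 + y t ^ 2)
      (2 * x t * deriv x t + 2 * y t * deriv y t) t := by
    intro t
    have : HasDerivAt (fun t => x t ^ 2 + y t ^ 2) _ t :=
      (((hx t).hasDerivAt.pow 2)).add ((hy t).hasDerivAt.pow 2)
    convert this using 1
    ring
  have hrder : ∀ t, HasDerivAt (fun t => Real.sqrt (x t ^ 2 + y t ^ 2))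
      ((x t * deriv x t + y t * deriv y t) / Real.sqrt (x t ^ 2 + y t ^ 2)) t := by
    intro t
    have := (hsder t).sqrt (ne_of_gt (hpos t))
    convert this using 1
    rw [div_eq_div_iff (ne_of_gt (hrpos t)) (mul_ne_zero two_ne_zero (ne_of_gt (hrpos t)))]
    ring
  have hderiv_r : deriv (fun t => Real.sqrt (x t ^ 2 + y t ^ 2)) =
      fun t => (x t * deriv x t + y t * deriv y t) / Real.sqrt (x t ^ 2 + y t ^ 2) :=
    funext fun t => (hrder t).deriv
  have hnder : HasDerivAt (fun t => x t * deriv x t + y t * deriv y t)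
      (deriv x t * deriv x t + x t * deriv (deriv x) t +
        (deriv y t * deriv y t + y t * deriv (deriv y) t)) t :=
    ((hx t).hasDerivAt.mul (hx' t).hasDerivAt).add
      ((hy t).hasDerivAt.mul (hy' t).hasDerivAt)
  have hgder : HasDerivAt
      (fun t => (x t * deriv x t + y t * deriv y t) / Real.sqrt (x t ^ 2 + y t ^ 2))
      (((deriv x t * deriv x t + x t * deriv (deriv x) t +
          (deriv y t * deriv y t + y t * deriv (deriv y) t)) * Real.sqrt (x t ^ 2 + y t ^ 2) -
        (x t * deriv x t + y t * deriv y t) *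
          ((x t * deriv x t + y t * deriv y t) / Real.sqrt (x t ^ 2 + y t ^ 2))) /
        Real.sqrt (x t ^ 2 + y t ^ 2) ^ 2) t :=
    hnder.div (hrder t) (ne_of_gt (hrpos t))
  rw [hderiv_r, hgder.deriv]
  beta_reduce
  -- abbreviations
  set R := Real.sqrt (x t ^ 2 + y t ^ 2) with hR
  have hRpos : R > 0 := hrpos t
  have hR2 : R ^ 2 = x t ^ 2 + y t ^ 2 := hsq t
  have hxx : deriv (deriv x) t = -(ω t ^ 2 * x t) := by linarith [hxeq t]
  have hyy : deriv (deriv y) t = -(ω t ^ 2 * y t) := by linarith [hyeq t]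
  have hh0 : (x 0 * deriv y 0 - y 0 * deriv x 0) = x t * deriv y t - y t * deriv x t :=
    (hconst t).symm
  rw [hxx, hyy, hh0]
  have key : (deriv x t * deriv x t + x t * (-(ω t ^ 2 * x t)) +
      (deriv y t * deriv y t + y t * (-(ω t ^ 2 * y t)))) * R ^ 2 -
      (x t * deriv x t + y t * deriv y t) ^ 2 + ω t ^ 2 * (R ^ 2) ^ 2
      = (x t * deriv y t - y t * deriv x t) ^ 2 := by
    rw [hR2]; ring
  have hRne : R ≠ 0 := ne_of_gt hRpos
  have expand : ((deriv x t * deriv x t + x t * -(ω t ^ 2 * x t) +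
      (deriv y t * deriv y t + y t * -(ω t ^ 2 * y t))) * R -
      (x t * deriv x t + y t * deriv y t) *
        ((x t * deriv x t + y t * deriv y t) / R)) / R ^ 2 + ω t ^ 2 * R
      = ((deriv x t * deriv x t + x t * (-(ω t ^ 2 * x t)) +
          (deriv y t * deriv y t + y t * (-(ω t ^ 2 * y t)))) * R ^ 2 -
          (x t * deriv x t + y t * deriv y t) ^ 2 + ω t ^ 2 * (R ^ 2) ^ 2) / R ^ 3 := by
    field_simp
  rw [expand, key]
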